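/- The interval Shapley value extension Φ* satisfies the axioms IEFF, TNP, SYM and ADD: for every cooperative interval game w on a finite player set N, (IEFF) Σ_{i∈N} mid(Φ*_i(w)) = mid(w(N)); (TNP) Φ*_i(w) = [0,0] for every total null player i of w; (SYM) Φ*_i(w) = Φ*_j(w) for all symmetric players i, j of w; and (ADD) Φ*(v + w) = Φ*(v) + Φ*(w) (componentwise interval addition) for all interval games v, w on N. -/

import Mathlib

open Finset

variable {N : Type*} [Fintype N] [DecidableEq N]

/-- A cooperative interval game, given by its lower and upper border games. -/
def IsIntervalGame (wl wu : Finset N → ℝ) : Prop :=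
  (∀ S, wl S ≤ wu S) ∧ wl ∅ = 0 ∧ wu ∅ = 0

/-- A selection of the interval game `(wl, wu)`. -/
def IsSelection (wl wu v : Finset N → ℝ) : Prop :=
  v ∅ = 0 ∧ ∀ S, wl S ≤ v S ∧ v S ≤ wu S

/-- Convexity (supermodularity) of a cooperative game. -/
def IsConvexGame (v : Finset N → ℝ) : Prop :=
  ∀ S T, v S + v T ≤ v (S ∪ T) + v (S ∩ T)

/-- Membership of a payoff vector in the core of a cooperative game. -/
def InCore (v : Finset N → ℝ) (x : N → ℝ) : Prop :=
  (∑ i, x i) = v Finset.univ ∧ ∀ S : Finset N, v S ≤ ∑ i ∈ S, x i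

/-- The selection core of an interval game. -/
def selectionCore (wl wu : Finset N → ℝ) : Set (N → ℝ) :=
  {x | ∃ v, IsSelection wl wu v ∧ InCore v x}

/-- `gen` of the interval core of an interval game: all real payoff vectors generated by
some element `(X i)_{i}` (given by lower bounds `Xl` and upper bounds `Xu`) of the interval core. -/
def genIntervalCore (wl wu : Finset N → ℝ) : Set (N → ℝ) :=
  {x | ∃ Xl Xu : N → ℝ, (∀ i, Xl i ≤ Xu i) ∧
    (∑ i, Xl i) = wl Finset.univ ∧ (∑ i, Xu i) = wu Finset.univ ∧
    (∀ S : Finset N, S.Nonempty → wl S ≤ ∑ i ∈ S, Xl i ∧ wu S ≤ ∑ i ∈ S, Xu i) ∧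
    ∀ i, Xl i ≤ x i ∧ x i ≤ Xu i}

/-- The Shapley coefficient `|S|! (n - |S| - 1)! / n!`. -/
noncomputable def shapleyCoeff (n k : ℕ) : ℝ :=
  (Nat.factorial k * Nat.factorial (n - k - 1) : ℝ) / (Nat.factorial n : ℝ)

/-- The Shapley value of a cooperative game. -/
noncomputable def shapley (v : Finset N → ℝ) (i : N) : ℝ :=
  ∑ S ∈ (Finset.univ.erase i).powerset,
    shapleyCoeff (Fintype.card N) S.card * (v (insert i S) - v S)

/-- Lower endpoint of the interval Shapley value extension `Φ*`. -/
noncomputable def phiLow (wl wu : Finset N → ℝ) (i : N) : ℝ :=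
  ∑ S ∈ (Finset.univ.erase i).powerset,
    shapleyCoeff (Fintype.card N) S.card * (wl (insert i S) - wu S)

/-- Upper endpoint of the interval Shapley value extension `Φ*`. -/
noncomputable def phiHigh (wl wu : Finset N → ℝ) (i : N) : ℝ :=
  ∑ S ∈ (Finset.univ.erase i).powerset,
    shapleyCoeff (Fintype.card N) S.card * (wu (insert i S) - wl S)

lemma coeff1 {n k : ℕ} (hk : 0 < k) (hkn : k ≤ n) :
    (k : ℝ) * shapleyCoeff n (k - 1) =
      (Nat.factorial k * Nat.factorial (n - k) : ℝ) / (Nat.factorial n : ℝ) := by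
  unfold shapleyCoeff
  have h1 : n - (k - 1) - 1 = n - k := by omega
  have h2 : (k : ℝ) * (Nat.factorial (k - 1) : ℝ) = (Nat.factorial k : ℝ) := by
    have := Nat.mul_factorial_pred hk.ne'
    push_cast [← this]
    ring
  rw [h1]
  field_simp
  rw [← h2]

lemma coeff2 {n k : ℕ} (hkn : k < n) :
    ((n - k : ℕ) : ℝ) * shapleyCoeff n k =
      (Nat.factorial k * Nat.factorial (n - k) : ℝ) / (Nat.factorial n : ℝ) := by
  unfold shapleyCoeff
  have h2 : ((n - k : ℕ) : ℝ) * (Nat.factorial (n - k - 1) : ℝ) = (Nat.factorial (n - k) : ℝ) := by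
    have := Nat.mul_factorial_pred (n := n - k) (by omega)
    push_cast [← this]
    ring
  field_simp
  rw [← h2]

lemma shapley_eff (v : Finset N → ℝ) (hv : v ∅ = 0) :
    ∑ i, shapley v i = v Finset.univ := by
  classical
  set n := Fintype.card N with hn
  have hsplit : ∑ i, shapley v i =
      (∑ i, ∑ S ∈ (Finset.univ.erase i).powerset, shapleyCoeff n S.card * v (insert i S)) -
      (∑ i, ∑ S ∈ (Finset.univ.erase i).powerset, shapleyCoeff n S.card * v S) := by
    rw [← Finset.sum_sub_distrib]
    refine Finset.sum_congr rfl fun i _ => ?_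
    rw [← Finset.sum_sub_distrib]
    refine Finset.sum_congr rfl fun S _ => ?_
    ring
  have hB : (∑ i, ∑ S ∈ (Finset.univ.erase i).powerset, shapleyCoeff n S.card * v S) =
      ∑ S ∈ Finset.univ.powerset, ((Finset.univ \ S).card : ℝ) * (shapleyCoeff n S.card * v S) := by
    rw [Finset.sum_comm' (t' := Finset.univ.powerset) (s' := fun S => Finset.univ \ S)]
    · refine Finset.sum_congr rfl fun S _ => ?_
      rw [Finset.sum_const, nsmul_eq_mul]
    · intro i S
      simp [Finset.subset_erase, Finset.mem_sdiff]
  have hA1 : ∀ i : N, (∑ S ∈ (Finset.univ.erase i).powerset, shapleyCoeff n S.card * v (insert i S)) =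
      ∑ T ∈ Finset.univ.powerset.filter (fun T => i ∈ T), shapleyCoeff n (T.card - 1) * v T := by
    intro i
    refine Finset.sum_nbij' (fun S => insert i S) (fun T => T.erase i) ?_ ?_ ?_ ?_ ?_
    · intro S hS
      simp only [Finset.mem_powerset, Finset.subset_erase] at hS
      simp [Finset.mem_filter, Finset.insert_subset_iff, hS.1]
    · intro T hT
      simp only [Finset.mem_filter, Finset.mem_powerset] at hT
      simp [Finset.mem_powerset, Finset.erase_subset_erase, hT.1]
    · intro S hS
      simp only [Finset.mem_powerset, Finset.subset_erase] at hS
      exact Finset.erase_insert hS.2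
    · intro T hT
      simp only [Finset.mem_filter, Finset.mem_powerset] at hT
      exact Finset.insert_erase hT.2
    · intro S hS
      simp only [Finset.mem_powerset, Finset.subset_erase] at hS
      rw [Finset.card_insert_of_notMem hS.2]
      simp
  have hA : (∑ i, ∑ S ∈ (Finset.univ.erase i).powerset, shapleyCoeff n S.card * v (insert i S)) =
      ∑ T ∈ Finset.univ.powerset, (T.card : ℝ) * (shapleyCoeff n (T.card - 1) * v T) := by
    rw [Finset.sum_congr rfl fun i _ => hA1 i]
    rw [Finset.sum_comm' (t' := Finset.univ.powerset) (s' := fun T => T)]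
    · refine Finset.sum_congr rfl fun T _ => ?_
      rw [Finset.sum_const, nsmul_eq_mul]
    · intro i T
      simp [Finset.mem_filter]
  rw [hsplit, hA, hB, ← Finset.sum_sub_distrib]
  have hcard : (Finset.univ : Finset N).card = n := by simp [hn]
  have key : ∀ T ∈ (Finset.univ : Finset N).powerset,
      ((T.card : ℝ) * (shapleyCoeff n (T.card - 1) * v T) -
        ((Finset.univ \ T).card : ℝ) * (shapleyCoeff n T.card * v T)) =
      if T = Finset.univ then v Finset.univ else 0 := by
    intro T hT
    simp only [Finset.mem_powerset] at hT
    have hTle : T.card ≤ n := by rw [← hcard]; exact Finset.card_le_card hT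
    have hsd : (Finset.univ \ T).card = n - T.card := by
      rw [Finset.card_sdiff_of_subset hT, hcard]
    by_cases hTuniv : T = Finset.univ
    · subst hTuniv
      simp only [if_pos rfl, Finset.sdiff_self, Finset.card_empty, hcard]
      by_cases hn0 : n = 0
      · have : (Finset.univ : Finset N) = ∅ := by
          rw [← Finset.card_eq_zero, hcard]; exact hn0
        rw [this, hv]; simp
      · have h1 : (n : ℝ) * shapleyCoeff n (n - 1) = 1 := by
          rw [coeff1 (by omega) (le_refl n)]
          simp [Nat.sub_self, Nat.factorial]
          exact Nat.factorial_ne_zero n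
        push_cast
        rw [← mul_assoc, h1]
        simp
    · rw [if_neg hTuniv]
      have hTlt : T.card < n := by
        rcases lt_or_eq_of_le hTle with h | h
        · exact h
        · exact absurd (Finset.eq_univ_of_card T (by rw [h, hn])) hTuniv
      by_cases hT0 : T.card = 0
      · have : T = ∅ := Finset.card_eq_zero.mp hT0
        subst this
        simp [hv]
      · have h1 := coeff1 (n := n) (k := T.card) (by omega) hTle
        have h2 := coeff2 (n := n) (k := T.card) hTlt
        rw [hsd]
        rw [← mul_assoc, ← mul_assoc, h1, h2]
        ring
  rw [Finset.sum_congr rfl key, Finset.sum_ite_eq' Finset.univ.powerset Finset.univ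
    (fun _ => v Finset.univ)]
  simp

lemma sym_sum (f g : Finset N → ℝ) (i j : N) (hij : i ≠ j)
    (hf : ∀ S : Finset N, S ⊆ Finset.univ \ {i, j} → f (insert i S) = f (insert j S))
    (hg : ∀ S : Finset N, S ⊆ Finset.univ \ {i, j} → g (insert i S) = g (insert j S)) :
    ∑ S ∈ (Finset.univ.erase i).powerset,
        shapleyCoeff (Fintype.card N) S.card * (f (insert i S) - g S) =
    ∑ S ∈ (Finset.univ.erase j).powerset,
        shapleyCoeff (Fintype.card N) S.card * (f (insert j S) - g S) := by
  classical
  have hsub : ∀ S : Finset N, i ∉ S → j ∉ S → S ⊆ Finset.univ \ {i, j} := by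
    intro S hi hj x hx
    simp only [Finset.mem_sdiff, Finset.mem_univ, true_and, Finset.mem_insert,
      Finset.mem_singleton]
    rintro (rfl | rfl) <;> [exact hi hx; exact hj hx]
  refine Finset.sum_nbij' (fun S => if j ∈ S then insert i (S.erase j) else S)
    (fun T => if i ∈ T then insert j (T.erase i) else T) ?_ ?_ ?_ ?_ ?_
  · intro S hS
    simp only [Finset.mem_powerset, Finset.subset_erase] at hS ⊢
    by_cases hj : j ∈ S
    · simp only [if_pos hj]
      refine ⟨?_, ?_⟩
      · refine Finset.insert_subset (Finset.mem_univ i) ?_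
        exact (Finset.erase_subset _ _).trans hS.1
      · simp only [Finset.mem_insert, Finset.mem_erase, not_or]
        exact ⟨hij.symm, by simp⟩
    · simp only [if_neg hj]
      exact ⟨hS.1, hj⟩
  · intro T hT
    simp only [Finset.mem_powerset, Finset.subset_erase] at hT ⊢
    by_cases hi : i ∈ T
    · simp only [if_pos hi]
      refine ⟨?_, ?_⟩
      · refine Finset.insert_subset (Finset.mem_univ j) ?_
        exact (Finset.erase_subset _ _).trans hT.1
      · simp only [Finset.mem_insert, Finset.mem_erase, not_or]
        exact ⟨hij, by simp⟩
    · simp only [if_neg hi]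
      exact ⟨hT.1, hi⟩
  · intro S hS
    simp only [Finset.mem_powerset, Finset.subset_erase] at hS
    by_cases hj : j ∈ S
    · simp only [if_pos hj]
      have hi' : i ∈ insert i (S.erase j) := Finset.mem_insert_self _ _
      rw [if_pos hi', Finset.erase_insert, Finset.insert_erase hj]
      simp only [Finset.mem_erase]
      exact fun h => hS.2 h.2
    · simp only [if_neg hj, if_neg hS.2]
  · intro T hT
    simp only [Finset.mem_powerset, Finset.subset_erase] at hT
    by_cases hi : i ∈ T
    · simp only [if_pos hi]
      have hj' : j ∈ insert j (T.erase i) := Finset.mem_insert_self _ _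
      rw [if_pos hj', Finset.erase_insert, Finset.insert_erase hi]
      simp only [Finset.mem_erase]
      exact fun h => hT.2 h.2
    · simp only [if_neg hi, if_neg hT.2]
  · intro S hS
    simp only [Finset.mem_powerset, Finset.subset_erase] at hS
    by_cases hj : j ∈ S
    · simp only [if_pos hj]
      have hiS' : i ∉ S.erase j := fun h => hS.2 (Finset.mem_of_mem_erase h)
      have hjS' : j ∉ S.erase j := Finset.notMem_erase _ _
      have hsub' : S.erase j ⊆ Finset.univ \ {i, j} := hsub _ hiS' hjS'
      have hcard : (insert i (S.erase j)).card = S.card := by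
        rw [Finset.card_insert_of_notMem hiS', Finset.card_erase_of_mem hj]
        have : 0 < S.card := Finset.card_pos.mpr ⟨j, hj⟩
        omega
      have hfval : f (insert j (insert i (S.erase j))) = f (insert i S) := by
        rw [Finset.insert_comm, Finset.insert_erase hj]
      have hgval : g (insert i (S.erase j)) = g S := by
        rw [hg _ hsub', Finset.insert_erase hj]
      rw [hcard, hfval, hgval]
    · simp only [if_neg hj]
      rw [hf S (hsub S hS.2 hj)]

lemma phi_sum_shapley (wl wu : Finset N → ℝ) (i : N) :
    phiLow wl wu i + phiHigh wl wu i = shapley (fun S => wl S + wu S) i := by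
  unfold phiLow phiHigh shapley
  rw [← Finset.sum_add_distrib]
  refine Finset.sum_congr rfl fun S _ => ?_
  ring

theorem interval_shapley_extension_axioms :
    -- (IEFF) indifference efficiency
    (∀ wl wu : Finset N → ℝ, IsIntervalGame wl wu →
      (∑ i, (phiLow wl wu i + phiHigh wl wu i) / 2) =
        (wl Finset.univ + wu Finset.univ) / 2) ∧
    -- (TNP) total null player property
    (∀ wl wu : Finset N → ℝ, IsIntervalGame wl wu → ∀ i : N,
      (∀ S : Finset N, S ⊆ Finset.univ.erase i →
        wl S = wu S ∧ wl (insert i S) = wl S ∧ wu (insert i S) = wl S) →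
      phiLow wl wu i = 0 ∧ phiHigh wl wu i = 0) ∧
    -- (SYM) symmetry
    (∀ wl wu : Finset N → ℝ, IsIntervalGame wl wu → ∀ i j : N,
      (∀ S : Finset N, S ⊆ Finset.univ \ {i, j} →
        wl (insert i S) = wl (insert j S) ∧ wu (insert i S) = wu (insert j S)) →
      phiLow wl wu i = phiLow wl wu j ∧ phiHigh wl wu i = phiHigh wl wu j) ∧
    -- (ADD) additivity
    (∀ vl vu wl wu : Finset N → ℝ, IsIntervalGame vl vu → IsIntervalGame wl wu →
      ∀ i : N,
        phiLow (fun S => vl S + wl S) (fun S => vu S + wu S) i =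
          phiLow vl vu i + phiLow wl wu i ∧
        phiHigh (fun S => vl S + wl S) (fun S => vu S + wu S) i =
          phiHigh vl vu i + phiHigh wl wu i) := by
  refine ⟨?_, ?_, ?_, ?_⟩
  · -- IEFF
    intro wl wu hw
    have h0 : (fun S : Finset N => wl S + wu S) ∅ = 0 := by
      simp [hw.2.1, hw.2.2]
    calc (∑ i, (phiLow wl wu i + phiHigh wl wu i) / 2)
        = (∑ i, (phiLow wl wu i + phiHigh wl wu i)) / 2 := by
          rw [Finset.sum_div]
      _ = (∑ i, shapley (fun S => wl S + wu S) i) / 2 := by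
          rw [Finset.sum_congr rfl fun i _ => phi_sum_shapley wl wu i]
      _ = (wl Finset.univ + wu Finset.univ) / 2 := by
          rw [shapley_eff _ h0]
  · -- TNP
    intro wl wu hw i h
    constructor
    · refine Finset.sum_eq_zero fun S hS => ?_
      obtain ⟨h1, h2, h3⟩ := h S (Finset.mem_powerset.mp hS)
      rw [h2, h1]
      ring
    · refine Finset.sum_eq_zero fun S hS => ?_
      obtain ⟨h1, h2, h3⟩ := h S (Finset.mem_powerset.mp hS)
      rw [h3]
      ring
  · -- SYM
    intro wl wu hw i j h
    by_cases hij : i = j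
    · subst hij; exact ⟨rfl, rfl⟩
    · constructor
      · exact sym_sum wl wu i j hij (fun S hS => (h S hS).1) (fun S hS => (h S hS).2)
      · exact sym_sum wu wl i j hij (fun S hS => (h S hS).2) (fun S hS => (h S hS).1)
  · -- ADD
    intro vl vu wl wu hv hw i
    constructor
    · unfold phiLow
      rw [← Finset.sum_add_distrib]
      refine Finset.sum_congr rfl fun S _ => ?_
      ring
    · unfold phiHigh
      rw [← Finset.sum_add_distrib]
      refine Finset.sum_congr rfl fun S _ => ?_
      ring
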